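/- Fix non-negative integers m, n and a partition λ with l(λ) ≤ m+n. The map sending each m-element subset V = {V_1 < ⋯ < V_m} of {1, …, m+n}, with complement H = {H_1 < ⋯ < H_n}, to the pair of partitions (μ, ν) defined by μ_i = λ_{V_i} + n + i − V_i (1 ≤ i ≤ m) and ν_j = λ_{H_j} + m + j − H_j (1 ≤ j ≤ n), is a bijection onto the set of all pairs of partitions (μ, ν) with l(μ) ≤ m, l(ν) ≤ n and μ ⋆_{m,n} ν = λ. Moreover, for the pair (μ, ν) corresponding to V, the sign satisfies ε_{m,n}(μ, ν) = (−1)^{Σ_{j=1}^{n}(m + j − H_j)} = (−1)^{mn − Σ_{i=1}^{m}(n + i − V_i)}. -/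

import Mathlib

open scoped Classical

/-- `f : ℕ → ℕ` represents a partition via its parts `f 1 ≥ f 2 ≥ ⋯`
(indices start at `1`; we normalize the unused value at `0` by `f 0 = f 1`). -/
def IsPartition (f : ℕ → ℕ) : Prop :=
  f 0 = f 1 ∧ (∀ i j, i ≤ j → f j ≤ f i) ∧ ∃ N, ∀ i, N ≤ i → f i = 0

/-- the partition `f` has length (number of positive parts) at most `r`,
i.e. `l(f) ≤ r`. -/
def LenLE (f : ℕ → ℕ) (r : ℕ) : Prop := ∀ i, r < i → f i = 0

/-- two partitions have the same parts. -/
def EqParts (f g : ℕ → ℕ) : Prop := ∀ i, 1 ≤ i → f i = g i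

/-- normalize the value at the (unused) index `0`. -/
def pad (f : ℕ → ℕ) : ℕ → ℕ := fun i => if i = 0 then f 1 else f i

/-- the multiset `{f i + N - i : i = 1, …, N}`. -/
def hooks (N : ℕ) (f : ℕ → ℕ) : Multiset ℕ :=
  (Multiset.range N).map (fun i => f (i + 1) + N - (i + 1))

/-- `lam` is the `(m,n)`-overlap of `mu` and `nu`, i.e. `mu ⋆_{m,n} nu = lam`:
`lam` is a partition of length at most `m + n` such that the sequence
`(lam i + (m+n) - i)_{i=1..m+n}` is a rearrangement of the concatenation of
`(mu i + m - i)_{i=1..m}` and `(nu j + n - j)_{j=1..n}`. -/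
def IsOverlap (m n : ℕ) (mu nu lam : ℕ → ℕ) : Prop :=
  LenLE lam (m + n) ∧ hooks (m + n) lam = hooks m mu + hooks n nu

/-- `mu ⋆_{m,n} nu = ∞`: the two hook sequences share a common value. -/
def OverlapInfinite (m n : ℕ) (mu nu : ℕ → ℕ) : Prop :=
  ∃ a, a ∈ hooks m mu ∧ a ∈ hooks n nu

/-- the sign `ε_{m,n}(mu, nu)` of the permutation sorting the concatenation of
`(mu i + m - i)_{i=1..m}` and `(nu j + n - j)_{j=1..n}` into strictly decreasing
order, computed as `(-1)` to the number of inversions. -/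
def overlapSign (m n : ℕ) (mu nu : ℕ → ℕ) : ℤ :=
  (-1) ^ (((Finset.range m ×ˢ Finset.range n).filter (fun p =>
    mu (p.1 + 1) + m - (p.1 + 1) < nu (p.2 + 1) + n - (p.2 + 1))).card)

/-- the truncation `(f_1, …, f_r)` of a partition. -/
def truncateP (f : ℕ → ℕ) (r : ℕ) : ℕ → ℕ := pad fun i => if i ≤ r then f i else 0

/-- `μ + ⟨k^l⟩ = (μ_1 + k, …, μ_l + k)`. -/
def addRect (mu : ℕ → ℕ) (k l : ℕ) : ℕ → ℕ := pad fun i => if i ≤ l then mu i + k else 0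

/-- `μ − ⟨k^l⟩ = (μ_1 − k, …, μ_l − k)`. -/
def subRect (mu : ℕ → ℕ) (k l : ℕ) : ℕ → ℕ := pad fun i => if i ≤ l then mu i - k else 0

/-- `ν ∪ a`: `ν` regarded as a sequence of length `r`, with the sequence `a`
appended after position `r`. -/
def concatSeq (nu : ℕ → ℕ) (r : ℕ) (tail : ℕ → ℕ) : ℕ → ℕ :=
  pad fun i => if i ≤ r then nu i else tail (i - r)

/-- the rectangular partition `⟨a^b⟩` (with `b` parts equal to `a`). -/
def rectP (a b : ℕ) : ℕ → ℕ := pad fun i => if i ≤ b then a else 0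

/-- the `(m,n)`-complement `λ̃ = (m − λ_n, …, m − λ_1)` of a partition `λ ⊂ ⟨m^n⟩`. -/
def complSeq (m n : ℕ) (lam : ℕ → ℕ) : ℕ → ℕ :=
  pad fun i => if i ≤ n then m - lam (n + 1 - i) else 0

noncomputable section

/-- the `i`-th part `λ'_i = #{j ≥ 1 : λ_j ≥ i}` of the conjugate partition. -/
def conjPart (f : ℕ → ℕ) (i : ℕ) : ℕ := {j : ℕ | 1 ≤ j ∧ i ≤ f j}.ncard

/-- the conjugate partition `λ'`. -/
def conjP (f : ℕ → ℕ) : ℕ → ℕ := pad fun i => conjPart f i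

/-- the set of integers `k ≤ min{m,n}` with `λ_{n+1−k} ≤ m − k`. -/
def indexSet (m n : ℕ) (lam : ℕ → ℕ) : Set ℤ :=
  {k : ℤ | k ≤ min (m : ℤ) (n : ℤ) ∧ (lam ((n : ℤ) + 1 - k).toNat : ℤ) ≤ (m : ℤ) - k}

/-- `k` is the `(m,n)`-index of `lam`: the largest integer `k ≤ min{m,n}`
with `λ_{n+1−k} ≤ m − k`. -/
def IsIndex (m n : ℕ) (lam : ℕ → ℕ) (k : ℤ) : Prop := IsGreatest (indexSet m n lam) k

/-- the `(m,n)`-index of `lam`. -/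
def indexOf (m n : ℕ) (lam : ℕ → ℕ) : ℤ := sSup (indexSet m n lam)

variable {F : Type*} [Field F]

/-- `Δ(X) = ∏_{i<j} (X_i − X_j)`. -/
def vanDet {n : ℕ} (X : Fin n → F) : F :=
  ∏ i : Fin n, ∏ j : Fin n, if i < j then X i - X j else 1

/-- `Δ(X; Y) = ∏_{x ∈ X, y ∈ Y} (x − y)`. -/
def vanPair {n m : ℕ} (X : Fin n → F) (Y : Fin m → F) : F :=
  ∏ i, ∏ j, (X i - Y j)

/-- the Schur function `s_λ(X)`. -/
def schur {n : ℕ} (lam : ℕ → ℕ) (X : Fin n → F) : F :=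
  if LenLE lam n then
    (Matrix.of fun i j : Fin n =>
      X i ^ (lam ((j : ℕ) + 1) + n - ((j : ℕ) + 1))).det / vanDet X
  else 0

/-- the subsequence of `X` indexed by `I` (in increasing order of indices). -/
def subSeq {n : ℕ} (X : Fin n → F) (I : Finset (Fin n)) : Fin I.card → F :=
  fun j => X (I.orderIsoOfFin rfl j).1

/-- the sign `ε(λ) = (−1)^{λ_1+⋯+λ_{n−k}} (−1)^{mk} (−1)^{k(k−1)/2}` from the
determinantal formula. -/
def LSsign (m n k : ℕ) (lam : ℕ → ℕ) : ℤ :=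
  (-1) ^ (∑ i ∈ Finset.range (n - k), lam (i + 1)) * (-1) ^ (m * k) *
    (-1) ^ (k * (k - 1) / 2)

/-- the Moens–Van der Jeugt block matrix. -/
def LSmat (k : ℕ) {n m : ℕ} (lam : ℕ → ℕ) (X : Fin n → F) (Y : Fin m → F) :
    Matrix (Fin (n + (m - k))) (Fin (n + (m - k))) F :=
  Matrix.of fun r c =>
    if hr : (r : ℕ) < n then
      if hc : (c : ℕ) < m then (X ⟨(r : ℕ), hr⟩ - Y ⟨(c : ℕ), hc⟩)⁻¹
      else X ⟨(r : ℕ), hr⟩ ^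
        ((lam ((c : ℕ) - m + 1) : ℤ) + (n : ℤ) - (m : ℤ) - (((c : ℕ) - m + 1 : ℕ) : ℤ))
    else
      if hc : (c : ℕ) < m then
        Y ⟨(c : ℕ), hc⟩ ^
          ((conjPart lam ((r : ℕ) - n + 1) : ℤ) + (m : ℤ) - (n : ℤ) - (((r : ℕ) - n + 1 : ℕ) : ℤ))
      else 0

/-- the Littlewood–Schur function `LS_λ(−X; Y)`, defined by the determinantal
formula of Moens and Van der Jeugt: it is `0` if the `(m,n)`-index `k` of `λ` is
negative, and otherwise equals `ε(λ) · Δ(Y;X)/(Δ(X)Δ(Y)) · det M`. -/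
def LS {n m : ℕ} (lam : ℕ → ℕ) (X : Fin n → F) (Y : Fin m → F) : F :=
  if indexOf m n lam < 0 then 0
  else (LSsign m n (indexOf m n lam).toNat lam : F) * vanPair Y X /
    (vanDet X * vanDet Y) * (LSmat (indexOf m n lam).toNat lam X Y).det

/-- `walkMu lam n I` is the partition with `i`-th part `λ_{V_i} + n + i − V_i`,
where `V_1 < ⋯ < V_card(I)` is the increasing (1-based) enumeration of `I`. -/
def walkMu (lam : ℕ → ℕ) (n : ℕ) {N : ℕ} (I : Finset (Fin N)) : ℕ → ℕ :=
  pad fun i =>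
    if h : 1 ≤ i ∧ i ≤ I.card then
      lam (((I.orderIsoOfFin rfl ⟨i - 1, by omega⟩).1 : ℕ) + 1) +
        (n + i - (((I.orderIsoOfFin rfl ⟨i - 1, by omega⟩).1 : ℕ) + 1))
    else 0

/-- `C_N(K)`: the set `{N − j + 1 : j ∈ {1,…,N} ∖ K}`. -/
def Cfin (N : ℕ) (K : Finset ℕ) : Finset ℕ :=
  (Finset.Icc 1 N \ K).image (fun j => N + 1 - j)

/-- the subpartition `sub_N(λ, s)`: its `j`-th part is
`λ_{s_j} + (N − s_j) − (r − j)`, where `s_1 < ⋯ < s_r` are the elements of `s`. -/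
def subPartF (N : ℕ) (lam : ℕ → ℕ) (s : Finset ℕ) : ℕ → ℕ :=
  pad fun j =>
    if h : 1 ≤ j ∧ j ≤ s.card then
      lam ((s.orderIsoOfFin rfl ⟨j - 1, by omega⟩).1) +
        (N - (s.orderIsoOfFin rfl ⟨j - 1, by omega⟩).1) - (s.card - j)
    else 0

end

/-- `α` is a quasi-partition associated to the subset with membership
predicate `inV` (the complement being taken inside `{1, …, m+n}`). -/
def IsQuasiPartition (m n : ℕ) (inV : ℕ → Prop) (α : ℕ → ℤ) : Prop :=
  0 ≤ α (m + n) ∧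
  (∀ i, 1 < i → i < m + n → ¬(α (i - 1) < α i ∧ α i < α (i + 1))) ∧
  (∀ i, 1 ≤ i → i < m + n → ((inV i ↔ inV (i + 1)) → α (i + 1) ≤ α i)) ∧
  (∀ i, 1 ≤ i → i < m + n → (¬(inV i ↔ inV (i + 1)) → α (i + 1) ≤ α i + 1))

/-- the integer sequence `α_1, …, α_N` is a partition: non-increasing and
non-negative. -/
def IsPartitionSeqZ (N : ℕ) (α : ℕ → ℤ) : Prop :=
  (∀ i j, 1 ≤ i → i ≤ j → j ≤ N → α j ≤ α i) ∧ ∀ i, 1 ≤ i → i ≤ N → 0 ≤ α i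

namespace OvAux
open Finset

variable {N : ℕ}

def ev (s : Finset (Fin N)) (k : Fin s.card) : ℕ := ((s.orderIsoOfFin rfl k).1 : ℕ)

lemma ev_strictMono (s : Finset (Fin N)) : StrictMono (ev s) := by
  intro k l h
  exact (s.orderIsoOfFin rfl).strictMono h

lemma ev_mem (s : Finset (Fin N)) (k : Fin s.card) : (s.orderIsoOfFin rfl k).1 ∈ s :=
  (s.orderIsoOfFin rfl k).2

lemma strictMono_add_le {c : ℕ} {g : Fin c → ℕ} (hg : StrictMono g) :
    ∀ d (k l : Fin c), l.val = k.val + d → g k + d ≤ g l := by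
  intro d
  induction d with
  | zero => intro k l h; have hkl : k = l := Fin.ext (by omega); rw [hkl]; omega
  | succ d ih =>
    intro k l h
    have hl : k.val + d < c := by omega
    have h1 := ih k ⟨k.val + d, hl⟩ rfl
    have hkv : (⟨k.val + d, hl⟩ : Fin c).val = k.val + d := rfl
    have h2 : g ⟨k.val + d, hl⟩ < g l := hg (by rw [Fin.lt_def, hkv]; omega)
    omega

lemma ev_add_le (s : Finset (Fin N)) (k l : Fin s.card) (h : k.val ≤ l.val) :
    ev s k + (l.val - k.val) ≤ ev s l :=
  strictMono_add_le (ev_strictMono s) _ k l (by omega)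

lemma ev_lb (s : Finset (Fin N)) (k : Fin s.card) : k.val ≤ ev s k := by
  have h0 : 0 < s.card := k.pos
  have h := ev_add_le s ⟨0, h0⟩ k (by simp)
  simp only [Fin.val_mk, Nat.sub_zero] at h
  omega

lemma ev_ub (s : Finset (Fin N)) (k : Fin s.card) : ev s k + s.card ≤ N + k.val := by
  have h0 : 0 < s.card := k.pos
  have h1 := ev_add_le s k ⟨s.card - 1, by omega⟩ (by simp; omega)
  have h2 : ev s ⟨s.card - 1, by omega⟩ < N := (s.orderIsoOfFin rfl _).1.isLt
  simp only [Fin.val_mk] at h1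
  have h3 : k.val < s.card := k.isLt
  omega


lemma walkMu_apply (lam : ℕ → ℕ) (a : ℕ) (s : Finset (Fin N)) {i : ℕ}
    (h1 : 1 ≤ i) (h2 : i ≤ s.card) :
    walkMu lam a s i = lam (ev s ⟨i - 1, by omega⟩ + 1) + (a + i - (ev s ⟨i - 1, by omega⟩ + 1)) := by
  have hne : i ≠ 0 := by omega
  simp only [walkMu, pad, if_neg hne, dif_pos (⟨h1, h2⟩ : 1 ≤ i ∧ i ≤ s.card)]
  rfl

lemma walkMu_zero (lam : ℕ → ℕ) (a : ℕ) (s : Finset (Fin N)) {i : ℕ} (h : s.card < i) :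
    walkMu lam a s i = 0 := by
  have hne : i ≠ 0 := by omega
  simp only [walkMu, pad, if_neg hne]
  rw [dif_neg (by omega)]

lemma lenLE_walkMu (lam : ℕ → ℕ) (a : ℕ) (s : Finset (Fin N)) :
    LenLE (walkMu lam a s) s.card := fun _ hi => walkMu_zero lam a s hi

lemma walkMu_anti (lam : ℕ → ℕ) {a : ℕ} (hlam : ∀ i j, i ≤ j → lam j ≤ lam i)
    (s : Finset (Fin N)) (ha : s.card + a = N) {i j : ℕ} (h1 : 1 ≤ i) (hij : i ≤ j) :
    walkMu lam a s j ≤ walkMu lam a s i := by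
  by_cases hj : j ≤ s.card
  · rw [walkMu_apply lam a s h1 (le_trans hij hj), walkMu_apply lam a s (by omega) hj]
    set ki : Fin s.card := ⟨i - 1, by omega⟩
    set kj : Fin s.card := ⟨j - 1, by omega⟩
    have hki : ki.val = i - 1 := rfl
    have hkj : kj.val = j - 1 := rfl
    have h3 := ev_add_le s ki kj (by omega)
    have h4 := ev_ub s kj
    have h5 := ev_lb s ki
    have h6 : lam (ev s kj + 1) ≤ lam (ev s ki + 1) := hlam _ _ (by omega)
    omega
  · rw [walkMu_zero lam a s (by omega)]
    exact Nat.zero_le _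

lemma isPartition_walkMu (lam : ℕ → ℕ) {a : ℕ} (hlam : ∀ i j, i ≤ j → lam j ≤ lam i)
    (s : Finset (Fin N)) (ha : s.card + a = N) : IsPartition (walkMu lam a s) := by
  refine ⟨rfl, ?_, s.card + 1, fun i hi => walkMu_zero lam a s (by omega)⟩
  intro i j hij
  rcases Nat.eq_zero_or_pos i with hi | hi
  · subst hi
    rcases Nat.eq_zero_or_pos j with hj | hj
    · subst hj; exact le_refl _
    · have h0 : walkMu lam a s 0 = walkMu lam a s 1 := rfl
      rw [h0]
      exact walkMu_anti lam hlam s ha (le_refl 1) hj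
  · exact walkMu_anti lam hlam s ha hi hij

lemma walkMu_hook (lam : ℕ → ℕ) {a : ℕ} (s : Finset (Fin N)) (ha : s.card + a = N)
    (k : Fin s.card) :
    walkMu lam a s (k.val + 1) + s.card - (k.val + 1) =
      lam (ev s k + 1) + N - (ev s k + 1) := by
  rw [walkMu_apply lam a s (by omega) (by omega : k.val + 1 ≤ s.card)]
  have hmk : (⟨k.val + 1 - 1, by omega⟩ : Fin s.card) = k := Fin.ext rfl
  rw [hmk]
  have h4 := ev_ub s k
  have h5 : ev s k < N := (s.orderIsoOfFin rfl k).1.isLt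
  have h6 : k.val < s.card := k.isLt
  omega

lemma range_eq_map_val (c : ℕ) :
    Multiset.range c = Multiset.map Fin.val (Finset.univ : Finset (Fin c)).1 := by
  rw [← Multiset.coe_range, ← List.map_coe_finRange_eq_range]
  rfl

lemma image_orderIso (s : Finset (Fin N)) :
    Finset.image (fun k : Fin s.card => (s.orderIsoOfFin rfl k).1) Finset.univ = s := by
  have hinj : Function.Injective (fun k : Fin s.card => (s.orderIsoOfFin rfl k).1) := by
    intro a b hab
    exact (s.orderIsoOfFin rfl).injective (Subtype.ext hab)
  apply Finset.eq_of_subset_of_card_le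
  · intro v hv
    rcases Finset.mem_image.1 hv with ⟨k, _, rfl⟩
    exact ev_mem s k
  · rw [Finset.card_image_of_injective _ hinj, card_univ, Fintype.card_fin]

lemma map_orderIso_val {α : Type*} (s : Finset (Fin N)) (F : Fin N → α) :
    Multiset.map (fun k : Fin s.card => F (s.orderIsoOfFin rfl k).1)
      (Finset.univ : Finset (Fin s.card)).1 = s.1.map F := by
  conv_rhs => rw [← image_orderIso s]
  rw [Finset.image_val_of_injOn
    (Set.injOn_of_injective (fun a b hab => (s.orderIsoOfFin rfl).injective (Subtype.ext hab)))]
  rw [Multiset.map_map]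
  rfl

lemma hooks_univ (c : ℕ) (f : ℕ → ℕ) :
    hooks c f = (Finset.univ : Finset (Fin c)).1.map (fun v => f (v.val + 1) + c - (v.val + 1)) := by
  rw [hooks, range_eq_map_val, Multiset.map_map]
  rfl

lemma hooks_walkMu (lam : ℕ → ℕ) {a : ℕ} (s : Finset (Fin N)) (ha : s.card + a = N) :
    hooks s.card (walkMu lam a s) =
      s.1.map (fun v : Fin N => lam (v.val + 1) + N - (v.val + 1)) := by
  rw [hooks_univ]
  conv_rhs => rw [← map_orderIso_val s (fun v : Fin N => lam (v.val + 1) + N - (v.val + 1))]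
  apply Multiset.map_congr rfl
  intro k _
  exact walkMu_hook lam s ha k

lemma card_filter_lt_fin (c : Fin N) :
    ((Finset.univ : Finset (Fin N)).filter (fun v => v < c)).card = c.val := by
  have h : (Finset.univ : Finset (Fin N)).filter (fun v => v < c) = Finset.Iio c := by
    ext v; simp [Finset.mem_Iio]
  rw [h, Fin.card_Iio]

lemma filter_lt_card (w : Finset (Fin N)) (c : Fin N) :
    (w.filter (fun v => v < c)).card =
      ((Finset.univ : Finset (Fin w.card)).filter
        (fun k => ((w.orderIsoOfFin rfl k).1 : Fin N) < c)).card := by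
  symm
  apply Finset.card_bij (fun k _ => (w.orderIsoOfFin rfl k).1)
  · intro k hk
    simp only [Finset.mem_filter] at hk ⊢
    exact ⟨ev_mem w k, hk.2⟩
  · intro a ha b hb hab
    exact (w.orderIsoOfFin rfl).injective (Subtype.ext hab)
  · intro v hv
    simp only [Finset.mem_filter] at hv
    refine ⟨(w.orderIsoOfFin rfl).symm ⟨v, hv.1⟩, ?_, ?_⟩
    · simp only [Finset.mem_filter, Finset.mem_univ, true_and]
      rw [OrderIso.apply_symm_apply]
      exact hv.2
    · rw [OrderIso.apply_symm_apply]

lemma count_initial (t : Finset (Fin N)) (j : Fin t.card) :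
    (t.filter (fun v => v < (t.orderIsoOfFin rfl j).1)).card = j.val := by
  rw [filter_lt_card]
  have h : (Finset.univ : Finset (Fin t.card)).filter
      (fun k => ((t.orderIsoOfFin rfl k).1 : Fin N) < (t.orderIsoOfFin rfl j).1) =
      Finset.univ.filter (fun k => k < j) := by
    apply Finset.filter_congr
    intro k _
    constructor
    · intro hk
      exact (t.orderIsoOfFin rfl).lt_iff_lt.1 (Subtype.coe_lt_coe.1 hk)
    · intro hk
      exact Subtype.coe_lt_coe.2 ((t.orderIsoOfFin rfl).lt_iff_lt.2 hk)
  rw [h, card_filter_lt_fin]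

lemma count_gt {s t : Finset (Fin N)} (hd : Disjoint s t) (hu : s ∪ t = Finset.univ)
    (j : Fin t.card) :
    ((Finset.univ : Finset (Fin s.card)).filter
      (fun i => ((t.orderIsoOfFin rfl j).1 : Fin N) < (s.orderIsoOfFin rfl i).1)).card
      + ev t j = s.card + j.val := by
  set h : Fin N := (t.orderIsoOfFin rfl j).1 with hh
  have hht : h ∈ t := ev_mem t j
  have hhs : h ∉ s := fun hs => (Finset.disjoint_left.1 hd hs) hht
  have hsplit : (s.filter (fun v => v < h)).card + (t.filter (fun v => v < h)).card = h.val := by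
    rw [← card_filter_lt_fin h, ← hu, Finset.filter_union,
      Finset.card_union_of_disjoint (Finset.disjoint_filter_filter hd)]
  have hj : (t.filter (fun v => v < h)).card = j.val := count_initial t j
  have hA : (s.filter (fun v => v < h)).card =
      ((Finset.univ : Finset (Fin s.card)).filter
        (fun k => ((s.orderIsoOfFin rfl k).1 : Fin N) < h)).card := filter_lt_card s h
  have hAB : ((Finset.univ : Finset (Fin s.card)).filter
        (fun k => ((s.orderIsoOfFin rfl k).1 : Fin N) < h)).card +
      ((Finset.univ : Finset (Fin s.card)).filter
        (fun k => ¬ ((s.orderIsoOfFin rfl k).1 : Fin N) < h)).card = s.card := by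
    rw [Finset.card_filter_add_card_filter_not, card_univ, Fintype.card_fin]
  have hneg : (Finset.univ : Finset (Fin s.card)).filter
        (fun k => ¬ ((s.orderIsoOfFin rfl k).1 : Fin N) < h) =
      (Finset.univ : Finset (Fin s.card)).filter
        (fun k => h < ((s.orderIsoOfFin rfl k).1 : Fin N)) := by
    apply Finset.filter_congr
    intro k _
    have hne : ((s.orderIsoOfFin rfl k).1 : Fin N) ≠ h := fun he => hhs (he ▸ ev_mem s k)
    constructor
    · intro hk; exact lt_of_le_of_ne (not_lt.1 hk) (Ne.symm hne)
    · intro hk; exact not_lt.2 hk.le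
  rw [hneg] at hAB
  have hevj : ev t j = h.val := rfl
  omega

lemma hook_strict {f : ℕ → ℕ} (hf : ∀ i j, i ≤ j → f j ≤ f i) {c u v : ℕ}
    (hu : 1 ≤ u) (huv : u < v) (hv : v ≤ c) : f v + c - v < f u + c - u := by
  have := hf u v (le_of_lt huv)
  omega

lemma nodup_hooks {f : ℕ → ℕ} (hf : ∀ i j, i ≤ j → f j ≤ f i) (c : ℕ) :
    (hooks c f).Nodup := by
  apply Multiset.Nodup.map_on _ (Multiset.nodup_range c)
  intro x hx y hy hxy
  rw [Multiset.mem_range] at hx hy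
  by_contra hne
  rcases Nat.lt_or_ge x y with h | h
  · have := hook_strict hf (c := c) (u := x + 1) (v := y + 1) (by omega) (by omega) (by omega)
    omega
  · have := hook_strict hf (c := c) (u := y + 1) (v := x + 1) (by omega) (by omega) (by omega)
    omega

lemma hooks_list (c : ℕ) (f : ℕ → ℕ) :
    hooks c f = ↑((List.range c).map (fun i => f (i + 1) + c - (i + 1))) := by
  rw [hooks, ← Multiset.coe_range, Multiset.map_coe]

lemma sorted_hooks {f : ℕ → ℕ} (hf : ∀ i j, i ≤ j → f j ≤ f i) (c : ℕ) :
    List.Pairwise (· > ·) ((List.range c).map (fun i => f (i + 1) + c - (i + 1))) := by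
  rw [List.pairwise_map, List.pairwise_iff_getElem]
  intro i j hi hj hij
  rw [List.length_range] at hi hj
  simp only [List.getElem_range]
  exact hook_strict hf (by omega) (by omega) (by omega)

lemma parts_eq_of_hooks_eq {f g : ℕ → ℕ} {c : ℕ}
    (hf : ∀ i j, i ≤ j → f j ≤ f i) (hg : ∀ i j, i ≤ j → g j ≤ g i)
    (h : hooks c f = hooks c g) : ∀ i, 1 ≤ i → i ≤ c → f i = g i := by
  intro i hi1 hi2
  rw [hooks_list, hooks_list, Multiset.coe_eq_coe] at h
  haveI : IsAntisymm ℕ (· > ·) := ⟨fun a b h1 h2 => by omega⟩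
  have heq := List.Perm.eq_of_pairwise (fun a b _ _ h1 h2 => by omega) (sorted_hooks hf c) (sorted_hooks hg c) h
  have hp : i - 1 < ((List.range c).map (fun k => f (k + 1) + c - (k + 1))).length := by
    simp [List.length_range]; omega
  have h2 := List.getElem_of_eq heq hp
  simp only [List.getElem_map, List.getElem_range] at h2
  have him : i - 1 + 1 = i := by omega
  rw [him] at h2
  omega

lemma hooks_congr {f g : ℕ → ℕ} {c : ℕ} (h : ∀ i, 1 ≤ i → i ≤ c → f i = g i) :
    hooks c f = hooks c g := by
  apply Multiset.map_congr rfl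
  intro x hx
  rw [Multiset.mem_range] at hx
  rw [h (x + 1) (by omega) (by omega)]

lemma hooks_split (f : ℕ → ℕ) (s : Finset (Fin N)) :
    hooks N f = s.1.map (fun v : Fin N => f (v.val + 1) + N - (v.val + 1)) +
      sᶜ.1.map (fun v : Fin N => f (v.val + 1) + N - (v.val + 1)) := by
  rw [hooks_univ, ← Multiset.map_add]
  congr 1
  rw [← Finset.union_compl s, ← Finset.disjUnion_eq_union s sᶜ disjoint_compl_right]
  rfl

lemma card_hooks (c : ℕ) (f : ℕ → ℕ) : Multiset.card (hooks c f) = c := by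
  simp [hooks]

end OvAux

open Finset OvAux in
lemma part1 {m n : ℕ} (lam : ℕ → ℕ) (hanti : ∀ i j, i ≤ j → lam j ≤ lam i)
    (hlen : LenLE lam (m + n)) (I : Finset (Fin (m + n))) (hI : I.card = m) :
    IsPartition (walkMu lam n I) ∧ LenLE (walkMu lam n I) m ∧
      IsPartition (walkMu lam m Iᶜ) ∧ LenLE (walkMu lam m Iᶜ) n ∧
      IsOverlap m n (walkMu lam n I) (walkMu lam m Iᶜ) lam ∧
      overlapSign m n (walkMu lam n I) (walkMu lam m Iᶜ) =
        (-1) ^ (∑ j : Fin Iᶜ.card,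
          (m + ((j : ℕ) + 1) - (((Iᶜ.orderIsoOfFin rfl j).1 : ℕ) + 1))) ∧
      overlapSign m n (walkMu lam n I) (walkMu lam m Iᶜ) =
        (-1) ^ (m * n - ∑ i : Fin I.card,
          (n + ((i : ℕ) + 1) - (((I.orderIsoOfFin rfl i).1 : ℕ) + 1))) := by
  have hIc : Iᶜ.card = n := by
    rw [Finset.card_compl, Fintype.card_fin, hI]; omega
  have haI : I.card + n = m + n := by omega
  have haC : Iᶜ.card + m = m + n := by omega
  set μ := walkMu lam n I with hμdef
  set ν := walkMu lam m Iᶜ with hνdef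
  have hP1 : IsPartition μ := isPartition_walkMu lam hanti I haI
  have hL1 : LenLE μ m := by have := lenLE_walkMu lam n I; rwa [hI] at this
  have hP2 : IsPartition ν := isPartition_walkMu lam hanti Iᶜ haC
  have hL2 : LenLE ν n := by have := lenLE_walkMu lam m Iᶜ; rwa [hIc] at this
  have hkI : hooks m μ = I.1.map (fun v : Fin (m + n) =>
      lam (v.val + 1) + (m + n) - (v.val + 1)) := by
    have := hooks_walkMu lam I haI; rwa [hI] at this
  have hkC : hooks n ν = Iᶜ.1.map (fun v : Fin (m + n) =>
      lam (v.val + 1) + (m + n) - (v.val + 1)) := by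
    have := hooks_walkMu lam Iᶜ haC; rwa [hIc] at this
  have hov : IsOverlap m n μ ν lam := by
    refine ⟨hlen, ?_⟩
    rw [hkI, hkC]
    exact hooks_split lam I
  -- hook values
  have hμh : ∀ i : Fin I.card, μ (i.val + 1) + m - (i.val + 1) =
      lam (ev I i + 1) + (m + n) - (ev I i + 1) := by
    intro i
    have h1 := walkMu_hook lam I haI i
    rw [← hμdef] at h1
    omega
  have hνh : ∀ j : Fin Iᶜ.card, ν (j.val + 1) + n - (j.val + 1) =
      lam (ev Iᶜ j + 1) + (m + n) - (ev Iᶜ j + 1) := by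
    intro j
    have h1 := walkMu_hook lam Iᶜ haC j
    rw [← hνdef] at h1
    omega
  have hne : ∀ (i : Fin I.card) (j : Fin Iᶜ.card), ev I i ≠ ev Iᶜ j := by
    intro i j he
    have h1 : (I.orderIsoOfFin rfl i).1 ∈ I := ev_mem I i
    have h2 : (Iᶜ.orderIsoOfFin rfl j).1 ∈ Iᶜ := ev_mem Iᶜ j
    have h3 : (I.orderIsoOfFin rfl i).1 = (Iᶜ.orderIsoOfFin rfl j).1 := Fin.ext he
    rw [h3] at h1
    exact (Finset.mem_compl.1 h2) h1
  have hcond : ∀ (i : Fin I.card) (j : Fin Iᶜ.card),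
      (μ (i.val + 1) + m - (i.val + 1) < ν (j.val + 1) + n - (j.val + 1)) ↔
        (Iᶜ.orderIsoOfFin rfl j).1 < (I.orderIsoOfFin rfl i).1 := by
    intro i j
    rw [hμh i, hνh j]
    have hlt1 : ev I i < m + n := (I.orderIsoOfFin rfl i).1.isLt
    have hlt2 : ev Iᶜ j < m + n := (Iᶜ.orderIsoOfFin rfl j).1.isLt
    have hne' := hne i j
    rw [Fin.lt_def]
    have hv1 : ((I.orderIsoOfFin rfl i).1 : Fin (m + n)).val = ev I i := rfl
    have hv2 : ((Iᶜ.orderIsoOfFin rfl j).1 : Fin (m + n)).val = ev Iᶜ j := rfl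
    rw [hv1, hv2]
    constructor
    · intro hlt
      by_contra hc
      have h3 : ev I i < ev Iᶜ j := by
        simp only [not_lt] at hc
        rcases Nat.lt_or_ge (ev I i) (ev Iᶜ j) with h | h
        · exact h
        · exact absurd (Nat.le_antisymm hc h) hne'
      have := hook_strict hanti (c := m + n) (u := ev I i + 1) (v := ev Iᶜ j + 1)
        (by omega) (by omega) (by omega)
      omega
    · intro hlt
      exact hook_strict hanti (c := m + n) (u := ev Iᶜ j + 1) (v := ev I i + 1)
        (by omega) (by omega) (by omega)
  -- counts
  set cnt : Fin Iᶜ.card → ℕ := fun j =>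
    ((Finset.univ : Finset (Fin I.card)).filter
      (fun i => (Iᶜ.orderIsoOfFin rfl j).1 < (I.orderIsoOfFin rfl i).1)).card with hcntdef
  set cnt' : Fin I.card → ℕ := fun i =>
    ((Finset.univ : Finset (Fin Iᶜ.card)).filter
      (fun j => (I.orderIsoOfFin rfl i).1 < (Iᶜ.orderIsoOfFin rfl j).1)).card with hcnt'def
  have hcnt : ∀ j, cnt j + ev Iᶜ j = I.card + j.val := fun j =>
    count_gt (s := I) (t := Iᶜ) disjoint_compl_right (Finset.union_compl I) j
  have hcnt' : ∀ i, cnt' i + ev I i = Iᶜ.card + i.val := fun i =>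
    count_gt (s := Iᶜ) (t := I) disjoint_compl_right.symm
      (by rw [Finset.union_comm]; exact Finset.union_compl I) i
  have hsumj : ∀ j : Fin Iᶜ.card, cnt j = m + (j.val + 1) - (ev Iᶜ j + 1) := by
    intro j; have := hcnt j; omega
  have hsumi : ∀ i : Fin I.card, cnt' i = n + (i.val + 1) - (ev I i + 1) := by
    intro i; have := hcnt' i; omega
  -- the inversion count
  have hcard : ((Finset.range m ×ˢ Finset.range n).filter (fun p =>
      μ (p.1 + 1) + m - (p.1 + 1) < ν (p.2 + 1) + n - (p.2 + 1))).card
      = ∑ j : Fin Iᶜ.card, cnt j := by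
    rw [Finset.card_filter, Finset.sum_product_right]
    have e3 : ∑ y ∈ Finset.range n, (∑ x ∈ Finset.range m,
        if μ (x + 1) + m - (x + 1) < ν (y + 1) + n - (y + 1) then 1 else 0)
        = ∑ j : Fin Iᶜ.card, (∑ x ∈ Finset.range m,
        if μ (x + 1) + m - (x + 1) < ν (j.val + 1) + n - (j.val + 1) then 1 else 0) := by
      rw [Fin.sum_univ_eq_sum_range (fun y => ∑ x ∈ Finset.range m,
        if μ (x + 1) + m - (x + 1) < ν (y + 1) + n - (y + 1) then 1 else 0) Iᶜ.card, hIc]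
    rw [e3]
    apply Finset.sum_congr rfl
    intro j _
    have e4a : ∑ x ∈ Finset.range m,
        (if μ (x + 1) + m - (x + 1) < ν (j.val + 1) + n - (j.val + 1) then 1 else 0)
        = ∑ i : Fin I.card,
        (if μ (i.val + 1) + m - (i.val + 1) < ν (j.val + 1) + n - (j.val + 1) then 1 else 0) := by
      rw [Fin.sum_univ_eq_sum_range (fun x =>
        if μ (x + 1) + m - (x + 1) < ν (j.val + 1) + n - (j.val + 1) then 1 else 0) I.card, hI]
    rw [e4a, ← Finset.card_filter]
    show _ = cnt j
    unfold cnt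
    congr 1
    apply Finset.filter_congr
    intro i _
    exact hcond i j
  have hsign1 : overlapSign m n μ ν = (-1) ^ (∑ j : Fin Iᶜ.card,
      (m + ((j : ℕ) + 1) - (((Iᶜ.orderIsoOfFin rfl j).1 : ℕ) + 1))) := by
    unfold overlapSign
    rw [hcard]
    congr 1
    exact Finset.sum_congr rfl (fun j _ => hsumj j)
  refine ⟨hP1, hL1, hP2, hL2, hov, hsign1, ?_⟩
  -- second sign formula
  have hSmn : (∑ j : Fin Iᶜ.card, cnt j) + (∑ i : Fin I.card, cnt' i) = m * n := by
    have hq : ∀ (j : Fin Iᶜ.card) (i : Fin I.card),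
        (if (Iᶜ.orderIsoOfFin rfl j).1 < (I.orderIsoOfFin rfl i).1 then (1:ℕ) else 0) +
        (if (I.orderIsoOfFin rfl i).1 < (Iᶜ.orderIsoOfFin rfl j).1 then (1:ℕ) else 0) = 1 := by
      intro j i
      have hne' := hne i j
      have hne'' : ¬ ((Iᶜ.orderIsoOfFin rfl j).1 < (I.orderIsoOfFin rfl i).1 ∧
          (I.orderIsoOfFin rfl i).1 < (Iᶜ.orderIsoOfFin rfl j).1) := by
        rintro ⟨h1, h2⟩; exact absurd (h1.trans h2) (lt_irrefl _)
      have htri : (Iᶜ.orderIsoOfFin rfl j).1 < (I.orderIsoOfFin rfl i).1 ∨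
          (I.orderIsoOfFin rfl i).1 < (Iᶜ.orderIsoOfFin rfl j).1 := by
        rcases lt_trichotomy ((Iᶜ.orderIsoOfFin rfl j).1) ((I.orderIsoOfFin rfl i).1) with h|h|h
        · exact Or.inl h
        · exact absurd h.symm (by intro hx; exact hne' (congrArg Fin.val hx))
        · exact Or.inr h
      split_ifs with h1 h2
      · exact absurd ⟨h1, h2⟩ hne''
      · rfl
      · rfl
      · rcases htri with h|h
        · exact absurd h h1
        · exact absurd h (by assumption)
    have hA : ∑ j : Fin Iᶜ.card, cnt j = ∑ j : Fin Iᶜ.card, ∑ i : Fin I.card,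
        (if (Iᶜ.orderIsoOfFin rfl j).1 < (I.orderIsoOfFin rfl i).1 then (1:ℕ) else 0) := by
      apply Finset.sum_congr rfl
      intro j _
      rw [hcntdef]
      exact Finset.card_filter _ _
    have hB : ∑ i : Fin I.card, cnt' i = ∑ j : Fin Iᶜ.card, ∑ i : Fin I.card,
        (if (I.orderIsoOfFin rfl i).1 < (Iᶜ.orderIsoOfFin rfl j).1 then (1:ℕ) else 0) := by
      rw [Finset.sum_comm]
      apply Finset.sum_congr rfl
      intro i _
      rw [hcnt'def]
      exact Finset.card_filter _ _
    rw [hA, hB, ← Finset.sum_add_distrib]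
    have : ∀ j : Fin Iᶜ.card, (∑ i : Fin I.card,
        (if (Iᶜ.orderIsoOfFin rfl j).1 < (I.orderIsoOfFin rfl i).1 then (1:ℕ) else 0)) +
        (∑ i : Fin I.card,
        (if (I.orderIsoOfFin rfl i).1 < (Iᶜ.orderIsoOfFin rfl j).1 then (1:ℕ) else 0))
        = I.card := by
      intro j
      rw [← Finset.sum_add_distrib]
      rw [Finset.sum_congr rfl (fun i _ => hq j i)]
      simp [Finset.card_univ]
    rw [Finset.sum_congr rfl (fun j _ => this j)]
    simp only [Finset.sum_const, Finset.card_univ, Fintype.card_fin, smul_eq_mul, mul_one]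
    rw [hIc, hI, Nat.mul_comm]
  rw [hsign1]
  congr 1
  have hTval : ∑ i : Fin I.card, cnt' i = ∑ i : Fin I.card,
      (n + ((i : ℕ) + 1) - (((I.orderIsoOfFin rfl i).1 : ℕ) + 1)) :=
    Finset.sum_congr rfl (fun i _ => hsumi i)
  have hSval : ∑ j : Fin Iᶜ.card, cnt j = ∑ j : Fin Iᶜ.card,
      (m + ((j : ℕ) + 1) - (((Iᶜ.orderIsoOfFin rfl j).1 : ℕ) + 1)) :=
    Finset.sum_congr rfl (fun j _ => hsumj j)
  omega

open Finset OvAux in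
lemma part2 {m n : ℕ} (lam : ℕ → ℕ) (hanti : ∀ i j, i ≤ j → lam j ≤ lam i)
    (mu nu : ℕ → ℕ) (hmu : IsPartition mu) (hmul : LenLE mu m) (hnu : IsPartition nu)
    (hnul : LenLE nu n) (hov : IsOverlap m n mu nu lam) :
    ∃! I : Finset (Fin (m + n)), I.card = m ∧
      EqParts (walkMu lam n I) mu ∧ EqParts (walkMu lam m Iᶜ) nu := by
  classical
  set F : Fin (m + n) → ℕ := fun v => lam (v.val + 1) + (m + n) - (v.val + 1) with hF
  have hFval : ∀ p : Fin (m + n), F p = lam (p.val + 1) + (m + n) - (p.val + 1) := fun p => rfl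
  have hFinj : ∀ p q : Fin (m + n), F p = F q → p = q := by
    intro p q h
    by_contra hne
    have hpq : p.val ≠ q.val := fun hv => hne (Fin.ext hv)
    rw [hFval, hFval] at h
    rcases Nat.lt_or_ge p.val q.val with hlt | hge
    · have := hook_strict hanti (c := m + n) (u := p.val + 1) (v := q.val + 1)
        (by omega) (by omega) (by omega)
      omega
    · have := hook_strict hanti (c := m + n) (u := q.val + 1) (v := p.val + 1)
        (by omega) (by omega) (by omega)
      omega
  have hMsub : ∀ x ∈ hooks m mu, x ∈ hooks (m + n) lam := by
    intro x hx; rw [hov.2]; exact Multiset.mem_add.2 (Or.inl hx)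
  set I : Finset (Fin (m + n)) := Finset.univ.filter (fun p => F p ∈ hooks m mu) with hIdef
  have hpos : ∀ x ∈ hooks (m + n) lam, ∃ p : Fin (m + n), F p = x := by
    intro x hx
    rcases Multiset.mem_map.1 hx with ⟨i, hi, hFi⟩
    rw [Multiset.mem_range] at hi
    exact ⟨⟨i, hi⟩, hFi⟩
  have himg : I.image F = (hooks m mu).toFinset := by
    ext x
    simp only [Finset.mem_image, Multiset.mem_toFinset]
    constructor
    · rintro ⟨p, hp, rfl⟩
      exact (Finset.mem_filter.1 hp).2
    · intro hx
      rcases hpos x (hMsub x hx) with ⟨p, hp⟩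
      exact ⟨p, Finset.mem_filter.2 ⟨Finset.mem_univ p, hp ▸ hx⟩, hp⟩
  have hcardI : I.card = m := by
    have h1 : (I.image F).card = I.card :=
      Finset.card_image_of_injOn (fun p _ q _ h => hFinj p q h)
    have h2 : (hooks m mu).toFinset.card = m := by
      rw [Multiset.toFinset_card_of_nodup (nodup_hooks hmu.2.1 m), card_hooks]
    rw [himg, h2] at h1
    exact h1.symm
  have haI : I.card + n = m + n := by omega
  have hwalkI : hooks I.card (walkMu lam n I) = I.1.map F := hooks_walkMu lam I haI
  have hIM : I.1.map F = hooks m mu := by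
    have hnodup : (I.1.map F).Nodup :=
      Multiset.Nodup.map_on (fun x _ y _ h => hFinj x y h) I.nodup
    have hsub : I.1.map F ⊆ hooks m mu := by
      intro x hx
      rcases Multiset.mem_map.1 hx with ⟨p, hp, rfl⟩
      exact (Finset.mem_filter.1 (show p ∈ I from hp)).2
    have hle := (Multiset.le_iff_subset hnodup).2 hsub
    apply Multiset.eq_of_le_of_card_le hle
    rw [card_hooks, Multiset.card_map]
    exact le_of_eq hcardI.symm
  have hwmu : hooks m (walkMu lam n I) = hooks m mu := by
    have h1 := hwalkI
    rw [hcardI] at h1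
    rw [h1, hIM]
  have hPw : IsPartition (walkMu lam n I) := isPartition_walkMu lam hanti I haI
  have heqmu : EqParts (walkMu lam n I) mu := by
    intro i hi
    by_cases hic : i ≤ m
    · exact parts_eq_of_hooks_eq hPw.2.1 hmu.2.1 hwmu i hi hic
    · rw [walkMu_zero lam n I (by omega), hmul i (by omega)]
  have hIcc : Iᶜ.card = n := by
    rw [Finset.card_compl, Fintype.card_fin, hcardI]; omega
  have haC : Iᶜ.card + m = m + n := by omega
  have hwalkC : hooks Iᶜ.card (walkMu lam m Iᶜ) = Iᶜ.1.map F := hooks_walkMu lam Iᶜ haC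
  have hCM : Iᶜ.1.map F = hooks n nu := by
    have hsplit := hooks_split lam I
    rw [hov.2, hIM] at hsplit
    exact (add_left_cancel hsplit).symm
  have hPwC : IsPartition (walkMu lam m Iᶜ) := isPartition_walkMu lam hanti Iᶜ haC
  have hwnu : hooks n (walkMu lam m Iᶜ) = hooks n nu := by
    have h1 := hwalkC
    rw [hIcc] at h1
    rw [h1, hCM]
  have heqnu : EqParts (walkMu lam m Iᶜ) nu := by
    intro i hi
    by_cases hic : i ≤ n
    · exact parts_eq_of_hooks_eq hPwC.2.1 hnu.2.1 hwnu i hi hic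
    · rw [walkMu_zero lam m Iᶜ (by omega), hnul i (by omega)]
  refine ⟨I, ⟨hcardI, heqmu, heqnu⟩, ?_⟩
  rintro I' ⟨hc', hmu', -⟩
  apply Finset.eq_of_subset_of_card_le ?_ (by rw [hcardI, hc'])
  intro p hp
  have haI' : I'.card + n = m + n := by omega
  have hwmu' : hooks I'.card (walkMu lam n I') = I'.1.map F := hooks_walkMu lam I' haI'
  have hmm : hooks I'.card (walkMu lam n I') = hooks I'.card mu :=
    hooks_congr (fun i h1 _ => hmu' i h1)
  have hx : F p ∈ hooks m mu := by
    have h1 : F p ∈ I'.1.map F := Multiset.mem_map_of_mem F hp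
    rw [← hwmu', hmm, hc'] at h1
    exact h1
  exact Finset.mem_filter.2 ⟨Finset.mem_univ p, hx⟩


/-- **Labeled staircase walks parametrize pairs of overlapping partitions**
(Proposition 4.4): for a fixed partition `λ` of length at most `m+n`, the map
`V ↦ (μ, ν)` with `μ_i = λ_{V_i} + n + i − V_i` and `ν_j = λ_{H_j} + m + j − H_j`
is a bijection from `m`-element subsets of `{1,…,m+n}` onto pairs of partitions
with `μ ⋆_{m,n} ν = λ`, and the sign of the overlap is
`(−1)^{Σ_j (m+j−H_j)} = (−1)^{mn − Σ_i (n+i−V_i)}`. -/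
theorem overlap_staircase_bijection
    {m n : ℕ} (lam : ℕ → ℕ) (hlam : IsPartition lam) (hlen : LenLE lam (m + n)) :
    (∀ I : Finset (Fin (m + n)), I.card = m →
      IsPartition (walkMu lam n I) ∧ LenLE (walkMu lam n I) m ∧
      IsPartition (walkMu lam m Iᶜ) ∧ LenLE (walkMu lam m Iᶜ) n ∧
      IsOverlap m n (walkMu lam n I) (walkMu lam m Iᶜ) lam ∧
      overlapSign m n (walkMu lam n I) (walkMu lam m Iᶜ) =
        (-1) ^ (∑ j : Fin Iᶜ.card,
          (m + ((j : ℕ) + 1) - (((Iᶜ.orderIsoOfFin rfl j).1 : ℕ) + 1))) ∧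
      overlapSign m n (walkMu lam n I) (walkMu lam m Iᶜ) =
        (-1) ^ (m * n - ∑ i : Fin I.card,
          (n + ((i : ℕ) + 1) - (((I.orderIsoOfFin rfl i).1 : ℕ) + 1)))) ∧
    (∀ mu nu : ℕ → ℕ, IsPartition mu → LenLE mu m → IsPartition nu → LenLE nu n →
      IsOverlap m n mu nu lam →
      ∃! I : Finset (Fin (m + n)), I.card = m ∧
        EqParts (walkMu lam n I) mu ∧ EqParts (walkMu lam m Iᶜ) nu) := by
  obtain ⟨-, hanti, -⟩ := hlam
  exact ⟨fun I hI => part1 lam hanti hlen I hI,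
    fun mu nu hmu hmul hnu hnul hov => part2 lam hanti mu nu hmu hmul hnu hnul hov⟩
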